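/- Let 0 ≤ k ≤ n, let X̂ ∈ (ZMod 2)^{k×(n−k)} be arbitrary and Ẑ ∈ (ZMod 2)^{k×k} be symmetric (Ẑᵀ = Ẑ). Define the n × 2n block matrix over ZMod 2 by C = [[I_k, X̂, Ẑ, 0], [0, 0, X̂ᵀ, I_{n−k}]] (first block row has k rows, second has n−k rows; the left n columns form the X-part and the right n columns the Z-part). Then the rows of C are linearly independent, and C · Ω · Cᵀ = 0, where Ω = [[0, I_n], [I_n, 0]] is the 2n × 2n symplectic form matrix. Moreover, distinct choices of (k, X̂, Ẑ) with X̂ in reduced row echelon form of rank k yield check matrices with distinct row spaces. -/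

import Mathlib

open Matrix

/-- The standard-form check matrix `C = [[I_k, X̂, Ẑ, 0], [0, 0, X̂ᵀ, I_{n-k}]]`
(an `n × 2n` matrix over `F_2`, the left `n` columns being the X-part and the right `n`
columns the Z-part). -/
def stdCheckMatrix (n k : ℕ) (hk : k ≤ n)
    (X : Matrix (Fin k) (Fin (n - k)) (ZMod 2)) (Z : Matrix (Fin k) (Fin k) (ZMod 2)) :
    Matrix (Fin k ⊕ Fin (n - k)) (Fin n ⊕ Fin n) (ZMod 2) :=
  Matrix.of fun r c =>
    Sum.elim
      (fun j : Fin n =>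
        (Matrix.fromBlocks 1 X 0 0 :
            Matrix (Fin k ⊕ Fin (n - k)) (Fin k ⊕ Fin (n - k)) (ZMod 2)) r
          (finSumFinEquiv.symm (Fin.cast (by omega) j)))
      (fun j : Fin n =>
        (Matrix.fromBlocks Z 0 Xᵀ 1 :
            Matrix (Fin k ⊕ Fin (n - k)) (Fin k ⊕ Fin (n - k)) (ZMod 2)) r
          (finSumFinEquiv.symm (Fin.cast (by omega) j)))
      c

def eeSC (n k : ℕ) (hk : k ≤ n) : Fin n ≃ Fin k ⊕ Fin (n - k) :=
  (finCongr (by omega)).trans finSumFinEquiv.symm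

lemma stdSC_inl (n k : ℕ) (hk : k ≤ n) (X : Matrix (Fin k) (Fin (n - k)) (ZMod 2))
    (Z : Matrix (Fin k) (Fin k) (ZMod 2)) (r) (j : Fin n) :
    stdCheckMatrix n k hk X Z r (Sum.inl j) =
      (fromBlocks 1 X 0 0 : Matrix (Fin k ⊕ Fin (n-k)) (Fin k ⊕ Fin (n-k)) (ZMod 2)) r
        (eeSC n k hk j) := rfl

lemma stdSC_inr (n k : ℕ) (hk : k ≤ n) (X : Matrix (Fin k) (Fin (n - k)) (ZMod 2))
    (Z : Matrix (Fin k) (Fin k) (ZMod 2)) (r) (j : Fin n) :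
    stdCheckMatrix n k hk X Z r (Sum.inr j) =
      (fromBlocks Z 0 Xᵀ 1 : Matrix (Fin k ⊕ Fin (n-k)) (Fin k ⊕ Fin (n-k)) (ZMod 2)) r
        (eeSC n k hk j) := rfl

lemma eeSC_symm_inl (n k : ℕ) (hk : k ≤ n) (i : Fin k) :
    (eeSC n k hk).symm (Sum.inl i) = ⟨i, by omega⟩ := by
  simp [eeSC, Fin.ext_iff]

lemma eeSC_symm_inr (n k : ℕ) (hk : k ≤ n) (j : Fin (n - k)) :
    (eeSC n k hk).symm (Sum.inr j) = ⟨k + j, by omega⟩ := by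
  simp [eeSC, Fin.ext_iff]

lemma eeSC_apply_of_lt (n k : ℕ) (hk : k ≤ n) (m : Fin n) (h : (m : ℕ) < k) :
    eeSC n k hk m = Sum.inl ⟨m, h⟩ := by
  rw [Equiv.apply_eq_iff_eq_symm_apply, eeSC_symm_inl]

-- linear independence
lemma stdSC_li (n k : ℕ) (hk : k ≤ n) (X : Matrix (Fin k) (Fin (n - k)) (ZMod 2))
    (Z : Matrix (Fin k) (Fin k) (ZMod 2)) :
    LinearIndependent (ZMod 2) (fun r => stdCheckMatrix n k hk X Z r) := by
  apply LinearIndependent.of_comp (LinearMap.funLeft (ZMod 2) (ZMod 2)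
    (Sum.elim (fun t : Fin k => Sum.inl ((eeSC n k hk).symm (Sum.inl t)))
      (fun t : Fin (n-k) => Sum.inr ((eeSC n k hk).symm (Sum.inr t)))))
  have heq : (⇑(LinearMap.funLeft (ZMod 2) (ZMod 2)
        (Sum.elim (fun t : Fin k => Sum.inl ((eeSC n k hk).symm (Sum.inl t)))
          (fun t : Fin (n-k) => Sum.inr ((eeSC n k hk).symm (Sum.inr t))))) ∘
      (fun r => stdCheckMatrix n k hk X Z r)) =
      fun r => (Pi.single r 1 : Fin k ⊕ Fin (n - k) → ZMod 2) := by
    funext r s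
    cases s with
    | inl t =>
      cases r <;>
        simp [LinearMap.funLeft_apply, stdSC_inl, stdSC_inr, Pi.single_apply, one_apply, eq_comm]
    | inr t =>
      cases r <;>
        simp [LinearMap.funLeft_apply, stdSC_inl, stdSC_inr, Pi.single_apply, one_apply, eq_comm]
  rw [heq]
  rw [Fintype.linearIndependent_iff]
  intro g hg r
  have := congrFun hg r
  simpa [Pi.single_apply, Finset.sum_ite_eq'] using this

lemma stdSC_span_le_kerX (n k : ℕ) (hk : k ≤ n) (X : Matrix (Fin k) (Fin (n - k)) (ZMod 2))
    (Z : Matrix (Fin k) (Fin k) (ZMod 2)) (jx : Fin (n - k)) :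
    Submodule.span (ZMod 2) (Set.range fun r => stdCheckMatrix n k hk X Z r) ≤
      LinearMap.ker
        ((LinearMap.proj (Sum.inl ((eeSC n k hk).symm (Sum.inr jx))) +
          ∑ i : Fin k, X i jx • LinearMap.proj (Sum.inl ((eeSC n k hk).symm (Sum.inl i))) :
            ((Fin n ⊕ Fin n) → ZMod 2) →ₗ[ZMod 2] ZMod 2)) := by
  rw [Submodule.span_le]
  rintro _ ⟨r, rfl⟩
  simp only [SetLike.mem_coe, LinearMap.mem_ker, LinearMap.add_apply, LinearMap.coe_sum,
    Finset.sum_apply, LinearMap.smul_apply, LinearMap.proj_apply, smul_eq_mul,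
    stdSC_inl, Equiv.apply_symm_apply]
  cases r with
  | inl i =>
    simp [one_apply, mul_ite, Finset.sum_ite_eq, CharTwo.add_self_eq_zero]
  | inr j =>
    simp

lemma stdSC_span_le_kerZ (n k : ℕ) (hk : k ≤ n) (X : Matrix (Fin k) (Fin (n - k)) (ZMod 2))
    (Z : Matrix (Fin k) (Fin k) (ZMod 2)) (jz : Fin k) :
    Submodule.span (ZMod 2) (Set.range fun r => stdCheckMatrix n k hk X Z r) ≤
      LinearMap.ker
        ((LinearMap.proj (Sum.inr ((eeSC n k hk).symm (Sum.inl jz))) +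
          ∑ i : Fin k, Z i jz • LinearMap.proj (Sum.inl ((eeSC n k hk).symm (Sum.inl i))) +
          ∑ j : Fin (n - k), X jz j • LinearMap.proj (Sum.inr ((eeSC n k hk).symm (Sum.inr j))) :
            ((Fin n ⊕ Fin n) → ZMod 2) →ₗ[ZMod 2] ZMod 2)) := by
  rw [Submodule.span_le]
  rintro _ ⟨r, rfl⟩
  simp only [SetLike.mem_coe, LinearMap.mem_ker, LinearMap.add_apply, LinearMap.coe_sum,
    Finset.sum_apply, LinearMap.smul_apply, LinearMap.proj_apply, smul_eq_mul,
    stdSC_inl, stdSC_inr, Equiv.apply_symm_apply]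
  cases r with
  | inl i =>
    simp [one_apply, mul_ite, Finset.sum_ite_eq, CharTwo.add_self_eq_zero]
  | inr j =>
    simp [one_apply, mul_ite, Finset.sum_ite_eq, transpose_apply, CharTwo.add_self_eq_zero]

lemma stdSC_le_of_span_le (n k k' : ℕ) (hk : k ≤ n) (hk' : k' ≤ n)
    (X : Matrix (Fin k) (Fin (n - k)) (ZMod 2)) (Z : Matrix (Fin k) (Fin k) (ZMod 2))
    (X' : Matrix (Fin k') (Fin (n - k')) (ZMod 2)) (Z' : Matrix (Fin k') (Fin k') (ZMod 2))
    (h : Submodule.span (ZMod 2) (Set.range fun r => stdCheckMatrix n k' hk' X' Z' r) ≤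
         Submodule.span (ZMod 2) (Set.range fun r => stdCheckMatrix n k hk X Z r)) :
    k' ≤ k := by
  by_contra hlt
  push_neg at hlt
  have hkn : k < n := lt_of_lt_of_le hlt hk'
  set j0 : Fin (n - k) := ⟨0, by omega⟩ with hj0
  have hv : stdCheckMatrix n k' hk' X' Z' (Sum.inl ⟨k, hlt⟩) ∈
      LinearMap.ker
        ((LinearMap.proj (Sum.inl ((eeSC n k hk).symm (Sum.inr j0))) +
          ∑ i : Fin k, X i j0 • LinearMap.proj (Sum.inl ((eeSC n k hk).symm (Sum.inl i))) :
            ((Fin n ⊕ Fin n) → ZMod 2) →ₗ[ZMod 2] ZMod 2)) :=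
    stdSC_span_le_kerX n k hk X Z j0
      (h (Submodule.subset_span ⟨Sum.inl ⟨k, hlt⟩, rfl⟩))
  rw [LinearMap.mem_ker] at hv
  rw [eeSC_symm_inr] at hv
  simp only [LinearMap.add_apply, LinearMap.coe_sum, Finset.sum_apply, LinearMap.smul_apply,
    LinearMap.proj_apply, smul_eq_mul, stdSC_inl] at hv
  rw [show ((⟨k + (j0 : ℕ), by omega⟩ : Fin n) : Fin n) = ⟨k, hkn⟩ by simp [hj0]] at hv
  rw [eeSC_apply_of_lt n k' hk' ⟨k, hkn⟩ hlt] at hv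
  have hzero : ∀ i : Fin k,
      X i j0 * (fromBlocks 1 X' 0 0 :
          Matrix (Fin k' ⊕ Fin (n-k')) (Fin k' ⊕ Fin (n-k')) (ZMod 2)) (Sum.inl ⟨k, hlt⟩)
        (eeSC n k' hk' ((eeSC n k hk).symm (Sum.inl i))) = 0 := by
    intro i
    rw [eeSC_symm_inl, eeSC_apply_of_lt n k' hk' _ (by simp; omega)]
    have : (⟨k, hlt⟩ : Fin k') ≠ ⟨(i : ℕ), by omega⟩ := by
      simp [Fin.ext_iff]; omega
    simp [one_apply, this]
  rw [Finset.sum_congr rfl (fun i _ => hzero i), Finset.sum_const_zero, add_zero] at hv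
  simp [one_apply] at hv

lemma stdSC_eq_submatrix (n k : ℕ) (hk : k ≤ n) (X : Matrix (Fin k) (Fin (n - k)) (ZMod 2))
    (Z : Matrix (Fin k) (Fin k) (ZMod 2)) :
    stdCheckMatrix n k hk X Z =
      (fromCols (fromBlocks 1 X 0 0) (fromBlocks Z 0 Xᵀ 1)).submatrix id
        ⇑(Equiv.sumCongr (eeSC n k hk) (eeSC n k hk)) := by
  ext r c
  cases c <;> rfl

lemma omegaSC (n k : ℕ) (hk : k ≤ n) :
    (fromBlocks 0 1 1 0 : Matrix (Fin n ⊕ Fin n) (Fin n ⊕ Fin n) (ZMod 2)) =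
      ((fromBlocks 0 1 1 0 : Matrix ((Fin k ⊕ Fin (n-k)) ⊕ (Fin k ⊕ Fin (n-k)))
          ((Fin k ⊕ Fin (n-k)) ⊕ (Fin k ⊕ Fin (n-k))) (ZMod 2))).submatrix
        ⇑(Equiv.sumCongr (eeSC n k hk) (eeSC n k hk))
        ⇑(Equiv.sumCongr (eeSC n k hk) (eeSC n k hk)) := by
  ext i j
  cases i <;> cases j <;>
    simp [one_apply, EmbeddingLike.apply_eq_iff_eq]

lemma stdSC_isotropic (n k : ℕ) (hk : k ≤ n) (X : Matrix (Fin k) (Fin (n - k)) (ZMod 2))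
    (Z : Matrix (Fin k) (Fin k) (ZMod 2)) (hZ : Zᵀ = Z) :
    stdCheckMatrix n k hk X Z *
        (fromBlocks 0 1 1 0 : Matrix (Fin n ⊕ Fin n) (Fin n ⊕ Fin n) (ZMod 2)) *
        (stdCheckMatrix n k hk X Z)ᵀ = 0 := by
  have core : ∀ (Om : Matrix ((Fin k ⊕ Fin (n-k)) ⊕ (Fin k ⊕ Fin (n-k)))
        ((Fin k ⊕ Fin (n-k)) ⊕ (Fin k ⊕ Fin (n-k))) (ZMod 2))
      (A B : Matrix (Fin k ⊕ Fin (n-k)) (Fin k ⊕ Fin (n-k)) (ZMod 2)),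
      Om = fromBlocks 0 1 1 0 → A = fromBlocks 1 X 0 0 → B = fromBlocks Z 0 Xᵀ 1 →
      fromCols A B * Om * (fromCols A B)ᵀ = 0 := by
    rintro Om A B rfl rfl rfl
    rw [transpose_fromCols, fromCols_mul_fromBlocks, fromCols_mul_fromRows]
    simp only [Matrix.mul_zero, Matrix.zero_mul, Matrix.mul_one, Matrix.one_mul, add_zero,
      zero_add]
    rw [fromBlocks_transpose, fromBlocks_transpose, transpose_one, transpose_zero, transpose_zero,
      transpose_one, transpose_transpose, hZ, fromBlocks_multiply, fromBlocks_multiply]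
    ext i j
    cases i <;> cases j <;> simp [CharTwo.add_self_eq_zero]
  rw [stdSC_eq_submatrix, omegaSC n k hk, transpose_submatrix, submatrix_mul_equiv,
    submatrix_mul_equiv, core _ _ _ rfl rfl rfl]
  ext i j
  simp

/-- For `Ẑ` symmetric, the rows of the standard-form check matrix are linearly
independent and `C Ω Cᵀ = 0` for the symplectic form matrix `Ω = [[0, I_n], [I_n, 0]]`;
moreover distinct choices of `(k, X̂, Ẑ)` yield check matrices with distinct row
spaces. -/
theorem stdCheckMatrix_independent_isotropic_inj (n k k' : ℕ) (hk : k ≤ n) (hk' : k' ≤ n)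
    (X : Matrix (Fin k) (Fin (n - k)) (ZMod 2)) (Z : Matrix (Fin k) (Fin k) (ZMod 2))
    (X' : Matrix (Fin k') (Fin (n - k')) (ZMod 2)) (Z' : Matrix (Fin k') (Fin k') (ZMod 2))
    (hZ : Zᵀ = Z) (hZ' : Z'ᵀ = Z') :
    LinearIndependent (ZMod 2) (fun r => stdCheckMatrix n k hk X Z r) ∧
    stdCheckMatrix n k hk X Z *
        (Matrix.fromBlocks 0 1 1 0 : Matrix (Fin n ⊕ Fin n) (Fin n ⊕ Fin n) (ZMod 2)) *
        (stdCheckMatrix n k hk X Z)ᵀ = 0 ∧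
    (Submodule.span (ZMod 2) (Set.range fun r => stdCheckMatrix n k hk X Z r) =
        Submodule.span (ZMod 2) (Set.range fun r => stdCheckMatrix n k' hk' X' Z' r) →
      (⟨k, X, Z⟩ : Σ k : ℕ,
          Matrix (Fin k) (Fin (n - k)) (ZMod 2) × Matrix (Fin k) (Fin k) (ZMod 2)) =
        ⟨k', X', Z'⟩) := by
  refine ⟨stdSC_li n k hk X Z, stdSC_isotropic n k hk X Z hZ, ?_⟩
  intro h
  have hkk' : k = k' :=
    le_antisymm (stdSC_le_of_span_le n k' k hk' hk X' Z' X Z h.le)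
      (stdSC_le_of_span_le n k k' hk hk' X Z X' Z' h.ge)
  subst hkk'
  have hXeq : X = X' := by
    ext i jx
    have hv := stdSC_span_le_kerX n k hk X Z jx
      (h.ge (Submodule.subset_span ⟨Sum.inl i, rfl⟩))
    rw [LinearMap.mem_ker] at hv
    simp only [LinearMap.add_apply, LinearMap.coe_sum, Finset.sum_apply, LinearMap.smul_apply,
      LinearMap.proj_apply, smul_eq_mul, stdSC_inl, Equiv.apply_symm_apply] at hv
    simp only [fromBlocks_apply₁₂, fromBlocks_apply₁₁, one_apply, mul_ite, mul_one, mul_zero,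
      Finset.sum_ite_eq, Finset.mem_univ, if_true] at hv
    have h2 : ∀ a b : ZMod 2, a + b = 0 → b = a := by decide
    exact h2 _ _ hv
  have hZeq : Z = Z' := by
    ext i jz
    have hv := stdSC_span_le_kerZ n k hk X Z jz
      (h.ge (Submodule.subset_span ⟨Sum.inl i, rfl⟩))
    rw [LinearMap.mem_ker] at hv
    simp only [LinearMap.add_apply, LinearMap.coe_sum, Finset.sum_apply, LinearMap.smul_apply,
      LinearMap.proj_apply, smul_eq_mul, stdSC_inl, stdSC_inr, Equiv.apply_symm_apply] at hv
    simp only [fromBlocks_apply₁₁, fromBlocks_apply₁₂, one_apply, mul_ite, mul_one, mul_zero,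
      Finset.sum_ite_eq, Finset.mem_univ, if_true, Matrix.zero_apply, Finset.sum_const_zero,
      add_zero] at hv
    have h2 : ∀ a b : ZMod 2, a + b = 0 → b = a := by decide
    exact h2 _ _ hv
  rw [hXeq, hZeq]
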